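/- Let q ∈ ℂ*, q² ≠ 1, u ∈ ℂ*, ℓ ∈ ℂ. With the U_q(sl(2)) generators A, B, C, D realized as (AF)(z) = F(qz), (DF)(z) = F(q⁻¹z), (BF)(z) = z/(q−q⁻¹)(q^ℓF(q⁻¹z) − q^{−ℓ}F(qz)), (CF)(z) = z⁻¹/(q−q⁻¹)(q^ℓF(qz) − q^{−ℓ}F(q⁻¹z)), the 2×2 matrix L(u) = [[uA − u⁻¹D, (q−q⁻¹)C], [(q−q⁻¹)B, uD − u⁻¹A]] admits the factorization L(u)F(z) = (q^ℓu − q^{−ℓ}u⁻¹)·Φ̂⁻¹(uq^{2ℓ}; z)·diag(q^{−ℓ}F(qz), q^ℓF(q⁻¹z))·Φ̂(u; z), where Φ̂(u; z) = [[1, q^ℓu⁻¹z⁻¹], [1, q^{−ℓ}uz⁻¹]], valid wherever Φ̂(uq^{2ℓ}; z) is invertible. -/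

import Mathlib

open Complex Matrix

/-- The intertwining matrix `Φ̂(u;z)`. -/
noncomputable def PhiHat (q ℓ u z : ℂ) : Matrix (Fin 2) (Fin 2) ℂ :=
  !![1, q ^ ℓ * u⁻¹ * z⁻¹; 1, q ^ (-ℓ) * u * z⁻¹]

private lemma key_aux (a b c u z w f g : ℂ)
    (hab : a * b = 1) (huc : u * c = 1) (hzw : z * w = 1) :
    !![(1:ℂ), a * (c * b^2) * w; 1, b * (u * a^2) * w] *
      !![u * f - c * g, w * (a * f - b * g);
         z * (a * g - b * f), u * g - c * f] =
    (a * u - b * c) •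
      (!![b * f, 0; 0, a * g] * !![(1:ℂ), a * c * w; 1, b * u * w]) := by
  ext i j
  fin_cases i <;> fin_cases j <;>
    simp [Matrix.mul_apply, Fin.sum_univ_two]
  · linear_combination ((-1)*u*f + c*g + (-1)*b^2*c*z*w*f + a*b*c*z*w*g) * hab + ((-1)*b^2*c*f + a*b*c*g) * hzw
  · linear_combination (b*c*u*w*g + (-1)*a*c*u*w*f) * hab + (b*w*g + (-1)*a*w*f) * huc
  · linear_combination ((-1)*u*f + c*g + (-1)*a*b*u*z*w*f + a^2*u*z*w*g) * hab + ((-1)*a*b*u*f + a^2*u*g) * hzw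
  · linear_combination (b*c*u*w*g + (-1)*a*c*u*w*f) * hab + (b*w*g + (-1)*a*w*f) * huc

theorem trigonometric_L_operator_factorization (q ℓ u : ℂ)
    (hq : q ≠ 0) (hq2 : q^2 ≠ 1) (hu : u ≠ 0)
    (F : ℂ → ℂ) (z : ℂ) (hz : z ≠ 0)
    (hinv : IsUnit (PhiHat q ℓ (u * q ^ (2*ℓ)) z).det) :
    !![u * F (q * z) - u⁻¹ * F (q⁻¹ * z),
        z⁻¹ * (q ^ ℓ * F (q * z) - q ^ (-ℓ) * F (q⁻¹ * z));
      z * (q ^ ℓ * F (q⁻¹ * z) - q ^ (-ℓ) * F (q * z)),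
        u * F (q⁻¹ * z) - u⁻¹ * F (q * z)] =
    (q ^ ℓ * u - q ^ (-ℓ) * u⁻¹) •
      ((PhiHat q ℓ (u * q ^ (2*ℓ)) z)⁻¹ *
        !![q ^ (-ℓ) * F (q * z), 0; 0, q ^ ℓ * F (q⁻¹ * z)] *
        PhiHat q ℓ u z) := by
  have ha : q ^ ℓ ≠ 0 := by simp [cpow_eq_zero_iff, hq]
  have hneg : q ^ (-ℓ) = (q ^ ℓ)⁻¹ := cpow_neg q ℓ
  have h2 : q ^ (2*ℓ) = (q ^ ℓ)^2 := by rw [two_mul, cpow_add _ _ hq, sq]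
  set a : ℂ := q ^ ℓ
  set P := PhiHat q ℓ (u * q ^ (2*ℓ)) z with hP
  set M := !![u * F (q * z) - u⁻¹ * F (q⁻¹ * z),
        z⁻¹ * (a * F (q * z) - q ^ (-ℓ) * F (q⁻¹ * z));
      z * (a * F (q⁻¹ * z) - q ^ (-ℓ) * F (q * z)),
        u * F (q⁻¹ * z) - u⁻¹ * F (q * z)] with hM
  have hPform : P = !![(1:ℂ), a * (u⁻¹ * (a⁻¹)^2) * z⁻¹; 1, a⁻¹ * (u * a^2) * z⁻¹] := by
    rw [hP, PhiHat, hneg, h2, mul_inv, inv_pow]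
  have hMform : M = !![u * F (q * z) - u⁻¹ * F (q⁻¹ * z),
        z⁻¹ * (a * F (q * z) - a⁻¹ * F (q⁻¹ * z));
      z * (a * F (q⁻¹ * z) - a⁻¹ * F (q * z)),
        u * F (q⁻¹ * z) - u⁻¹ * F (q * z)] := by rw [hM, hneg]
  have key : P * M = (a * u - a⁻¹ * u⁻¹) •
      (!![a⁻¹ * F (q * z), 0; 0, a * F (q⁻¹ * z)] * PhiHat q ℓ u z) := by
    rw [hPform, hMform]
    have := key_aux a a⁻¹ u⁻¹ u z z⁻¹ (F (q * z)) (F (q⁻¹ * z))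
      (mul_inv_cancel₀ ha) (mul_inv_cancel₀ hu) (mul_inv_cancel₀ hz)
    convert this using 2 <;>
      simp [PhiHat, hneg, a] <;> ring
  have hfac : (a * u - q ^ (-ℓ) * u⁻¹) = (a * u - a⁻¹ * u⁻¹) := by rw [hneg]
  calc M = P⁻¹ * (P * M) := by
        rw [← Matrix.mul_assoc, Matrix.nonsing_inv_mul _ hinv, Matrix.one_mul]
    _ = (a * u - q ^ (-ℓ) * u⁻¹) •
        (P⁻¹ * !![q ^ (-ℓ) * F (q * z), 0; 0, a * F (q⁻¹ * z)] * PhiHat q ℓ u z) := by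
        rw [key, Matrix.mul_smul, Matrix.mul_assoc, hfac, hneg]
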